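/- arXiv:2510.23237 — 3 statements merged into one kernel-verified Lean document; each statement's English description precedes it below -/
import Mathlib

section
/- Let 0 ≤ a, b ≤ 1 and let e₀,e₁,e₂,f₀,f₁,f₂ be positive reals with e₀+e₁+e₂ = 1 and f₀+f₁+f₂ = 1. Let ρ ∈ Matrix (Fin 2) (Fin 2) ℂ be given by ρ = !![r, c; conj c, s] with r,s ≥ 0 real, r+s = 1. Let Û₁ ∈ Matrix (Fin 2 × Fin 2) (Fin 2 × Fin 2) ℂ be the block-diagonal matrix Û₁ = U₁ ⊕ U₂ with U₁ = !![√a, √(1−a); √(1−a), −√a] and U₂ = !![√(1−b), √b; √b, −√(1−b)], and let Û₂ ∈ Matrix (Fin 2 × Fin 3) (Fin 2 × Fin 3) ℂ be the block-diagonal matrix Û₂ = V₀ ⊕ V₁, where V₀ is the 3×3 matrix with columns (√e₀,√e₁,√e₂)ᵀ, (−√e₁/√(e₀+e₁), √e₀/√(e₀+e₁), 0)ᵀ, (−√(e₀e₂)/√(e₀+e₁), −√(e₁e₂)/√(e₀+e₁), √(e₀+e₁))ᵀ, and V₁ is defined identically with f in place of e. Fix y ∈ Fin 3 and let P_y = I₂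 ⊗ |y⟩⟨y|. Define ρ' = Tr₁[Û₁ (ρ ⊗ |0⟩⟨0|) Û₁†] (partial trace over the first tensor factor, where |0⟩⟨0| is the 2×2 matrix with 1 in the (0,0) entry and 0 elsewhere) and σ = Tr₂[P_y Û₂ (ρ' ⊗ |0⟩⟨0|₃) Û₂† P_y] (partial trace over the second (3-dimensional) tensor factor, where |0⟩⟨0|₃ is the 3×3 matrix with 1 in the (0,0) entry and 0 elsewhere). Set N = e_y·(a·r + (1−b)·s) + f_y·((1−a)·r + b·s). Then trace σ = N, and if N > 0, the diagonal entries of σ/N are σ₀₀/N = e_y·(a·r + (1−b)·s)/N and σ₁₁/N = f_y·((1−a)·r + b·s)/N; that is, they coincide with the posterior distribution x_t(j | y) = P(y | j)·(A x_{t−1})(j) / Σ_j P(y | j)·(A x_{t−1})(j) of the hidden Markov model with transition matrix A = !![a, 1−b; 1−a, b], emission probabilities P(y | 0) = e_y, P(y | 1) = f_y, and prior belief x_{t−1} = (r, s)ᵀ. -/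
set_option maxHeartbeats 1000000


open Matrix Complex
open scoped Kronecker

/-- Proposition 1: the quantum circuit implementation of a 2-state, 3-output
hidden Markov model recovers, on the diagonal of the normalized output density
matrix, the classical Bayesian posterior
`x_t(j|y) = P(y|j) (A x_{t-1})(j) / ∑_j P(y|j) (A x_{t-1})(j)`. -/
theorem HMM_quantum_circuit_posterior
    (a b : ℝ) (ha0 : 0 ≤ a) (ha1 : a ≤ 1) (hb0 : 0 ≤ b) (hb1 : b ≤ 1)
    (e₀ e₁ e₂ f₀ f₁ f₂ : ℝ)
    (he₀ : 0 < e₀) (he₁ : 0 < e₁) (he₂ : 0 < e₂)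
    (hf₀ : 0 < f₀) (hf₁ : 0 < f₁) (hf₂ : 0 < f₂)
    (hesum : e₀ + e₁ + e₂ = 1) (hfsum : f₀ + f₁ + f₂ = 1)
    (r s : ℝ) (hr : 0 ≤ r) (hs : 0 ≤ s) (hrs : r + s = 1) (c : ℂ)
    (ρ : Matrix (Fin 2) (Fin 2) ℂ)
    (hρ : ρ = !![(r : ℂ), c; (starRingEnd ℂ) c, (s : ℂ)])
    (U₁ U₂ : Matrix (Fin 2) (Fin 2) ℂ)
    (hU₁ : U₁ = !![(Real.sqrt a : ℂ), (Real.sqrt (1 - a) : ℂ);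
                   (Real.sqrt (1 - a) : ℂ), -(Real.sqrt a : ℂ)])
    (hU₂ : U₂ = !![(Real.sqrt (1 - b) : ℂ), (Real.sqrt b : ℂ);
                   (Real.sqrt b : ℂ), -(Real.sqrt (1 - b) : ℂ)])
    (Uhat₁ : Matrix (Fin 2 × Fin 2) (Fin 2 × Fin 2) ℂ)
    (hUhat₁ : Uhat₁ = (Matrix.single (0 : Fin 2) (0 : Fin 2) (1 : ℂ)) ⊗ₖ U₁ +
                      (Matrix.single (1 : Fin 2) (1 : Fin 2) (1 : ℂ)) ⊗ₖ U₂)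
    (V₀ V₁ : Matrix (Fin 3) (Fin 3) ℂ)
    (hV₀ : V₀ = !![((Real.sqrt e₀ : ℝ) : ℂ),
                   ((-(Real.sqrt e₁) / Real.sqrt (e₀ + e₁) : ℝ) : ℂ),
                   ((-(Real.sqrt (e₀ * e₂)) / Real.sqrt (e₀ + e₁) : ℝ) : ℂ);
                   ((Real.sqrt e₁ : ℝ) : ℂ),
                   ((Real.sqrt e₀ / Real.sqrt (e₀ + e₁) : ℝ) : ℂ),
                   ((-(Real.sqrt (e₁ * e₂)) / Real.sqrt (e₀ + e₁) : ℝ) : ℂ);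
                   ((Real.sqrt e₂ : ℝ) : ℂ), (0 : ℂ),
                   ((Real.sqrt (e₀ + e₁) : ℝ) : ℂ)])
    (hV₁ : V₁ = !![((Real.sqrt f₀ : ℝ) : ℂ),
                   ((-(Real.sqrt f₁) / Real.sqrt (f₀ + f₁) : ℝ) : ℂ),
                   ((-(Real.sqrt (f₀ * f₂)) / Real.sqrt (f₀ + f₁) : ℝ) : ℂ);
                   ((Real.sqrt f₁ : ℝ) : ℂ),
                   ((Real.sqrt f₀ / Real.sqrt (f₀ + f₁) : ℝ) : ℂ),
                   ((-(Real.sqrt (f₁ * f₂)) / Real.sqrt (f₀ + f₁) : ℝ) : ℂ);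
                   ((Real.sqrt f₂ : ℝ) : ℂ), (0 : ℂ),
                   ((Real.sqrt (f₀ + f₁) : ℝ) : ℂ)])
    (Uhat₂ : Matrix (Fin 2 × Fin 3) (Fin 2 × Fin 3) ℂ)
    (hUhat₂ : Uhat₂ = (Matrix.single (0 : Fin 2) (0 : Fin 2) (1 : ℂ)) ⊗ₖ V₀ +
                      (Matrix.single (1 : Fin 2) (1 : Fin 2) (1 : ℂ)) ⊗ₖ V₁)
    (y : Fin 3)
    (Py : Matrix (Fin 2 × Fin 3) (Fin 2 × Fin 3) ℂ)
    (hPy : Py = (1 : Matrix (Fin 2) (Fin 2) ℂ) ⊗ₖ Matrix.single y y (1 : ℂ))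
    (ρ' : Matrix (Fin 2) (Fin 2) ℂ)
    (hρ' : ρ' = fun j k => ∑ i : Fin 2,
      (Uhat₁ * (ρ ⊗ₖ Matrix.single (0 : Fin 2) (0 : Fin 2) (1 : ℂ)) * Uhat₁ᴴ)
        (i, j) (i, k))
    (σ : Matrix (Fin 2) (Fin 2) ℂ)
    (hσ : σ = fun j k => ∑ z : Fin 3,
      (Py * (Uhat₂ * (ρ' ⊗ₖ Matrix.single (0 : Fin 3) (0 : Fin 3) (1 : ℂ)) *
        Uhat₂ᴴ) * Py) (j, z) (k, z))
    (N : ℝ)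
    (hN : N = ![e₀, e₁, e₂] y * (a * r + (1 - b) * s) +
              ![f₀, f₁, f₂] y * ((1 - a) * r + b * s)) :
    σ.trace = (N : ℂ) ∧
    (0 < N →
      σ 0 0 / (N : ℂ) = ((![e₀, e₁, e₂] y * (a * r + (1 - b) * s) : ℝ) : ℂ) / (N : ℂ) ∧
      σ 1 1 / (N : ℂ) = ((![f₀, f₁, f₂] y * ((1 - a) * r + b * s) : ℝ) : ℂ) / (N : ℂ)) := by

  have sqC : ∀ x : ℝ, 0 ≤ x → (Real.sqrt x : ℂ) * Real.sqrt x = (x : ℂ) := by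
    intro x hx; rw [← Complex.ofReal_mul, Real.mul_self_sqrt hx]
  have ha1' : (0:ℝ) ≤ 1 - a := by linarith
  have hb1' : (0:ℝ) ≤ 1 - b := by linarith
  have hρ'00 : ρ' 0 0 = ((a * r + (1 - b) * s : ℝ) : ℂ) := by
    subst hρ' hUhat₁ hρ hU₁ hU₂
    simp only [Matrix.mul_apply, Fintype.sum_prod_type, Fin.sum_univ_two,
      Matrix.add_apply, kroneckerMap_apply, Matrix.conjTranspose_apply,
      Matrix.single, Matrix.of_apply, Matrix.cons_val', Matrix.cons_val_zero,
      Matrix.cons_val_one, Matrix.head_cons, Matrix.head_fin_const, Matrix.empty_val',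
      Matrix.cons_val_fin_one]
    norm_num [Complex.star_def, Complex.conj_ofReal]
    push_cast
    linear_combination (norm := (push_cast; ring1)) (r:ℂ) * sqC a ha0 + (s:ℂ) * sqC (1-b) hb1'
  have hρ'11 : ρ' 1 1 = (((1 - a) * r + b * s : ℝ) : ℂ) := by
    subst hρ' hUhat₁ hρ hU₁ hU₂
    simp only [Matrix.mul_apply, Fintype.sum_prod_type, Fin.sum_univ_two,
      Matrix.add_apply, kroneckerMap_apply, Matrix.conjTranspose_apply,
      Matrix.single, Matrix.of_apply, Matrix.cons_val', Matrix.cons_val_zero,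
      Matrix.cons_val_one, Matrix.head_cons, Matrix.head_fin_const, Matrix.empty_val',
      Matrix.cons_val_fin_one]
    norm_num [Complex.star_def, Complex.conj_ofReal]
    push_cast
    linear_combination (norm := (push_cast; ring1)) (r:ℂ) * sqC (1-a) ha1' + (s:ℂ) * sqC b hb0
  have hσ00 : σ 0 0 = ((![e₀, e₁, e₂] y : ℝ) : ℂ) * ρ' 0 0 := by
    subst hσ hPy hUhat₂ hV₀ hV₁
    fin_cases y <;>
    · simp only [Matrix.mul_apply, Fintype.sum_prod_type, Fin.sum_univ_two,
        Fin.sum_univ_three, Matrix.add_apply, kroneckerMap_apply,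
        Matrix.conjTranspose_apply, Matrix.single, Matrix.one_apply,
        Matrix.of_apply, Matrix.cons_val', Matrix.cons_val_zero,
        Matrix.cons_val_one, Matrix.head_cons, Matrix.head_fin_const,
        Matrix.empty_val', Matrix.cons_val_fin_one, Matrix.cons_val_two,
        Matrix.tail_cons]
      norm_num [Fin.ext_iff, Complex.star_def, Complex.conj_ofReal]
      first
      | linear_combination ρ' 0 0 * sqC e₀ he₀.le
      | linear_combination ρ' 0 0 * sqC e₁ he₁.le
      | linear_combination ρ' 0 0 * sqC e₂ he₂.le
  have hσ11 : σ 1 1 = ((![f₀, f₁, f₂] y : ℝ) : ℂ) * ρ' 1 1 := by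
    subst hσ hPy hUhat₂ hV₀ hV₁
    fin_cases y <;>
    · simp only [Matrix.mul_apply, Fintype.sum_prod_type, Fin.sum_univ_two,
        Fin.sum_univ_three, Matrix.add_apply, kroneckerMap_apply,
        Matrix.conjTranspose_apply, Matrix.single, Matrix.one_apply,
        Matrix.of_apply, Matrix.cons_val', Matrix.cons_val_zero,
        Matrix.cons_val_one, Matrix.head_cons, Matrix.head_fin_const,
        Matrix.empty_val', Matrix.cons_val_fin_one, Matrix.cons_val_two,
        Matrix.tail_cons]
      norm_num [Fin.ext_iff, Complex.star_def, Complex.conj_ofReal]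
      first
      | linear_combination ρ' 1 1 * sqC f₀ hf₀.le
      | linear_combination ρ' 1 1 * sqC f₁ hf₁.le
      | linear_combination ρ' 1 1 * sqC f₂ hf₂.le
  have hA : σ 0 0 = ((![e₀, e₁, e₂] y * (a * r + (1 - b) * s) : ℝ) : ℂ) := by
    rw [hσ00, hρ'00]; push_cast; ring
  have hB : σ 1 1 = ((![f₀, f₁, f₂] y * ((1 - a) * r + b * s) : ℝ) : ℂ) := by
    rw [hσ11, hρ'11]; push_cast; ring
  refine ⟨?_, fun _ => ⟨by rw [hA], by rw [hB]⟩⟩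
  rw [Matrix.trace_fin_two, hA, hB, hN]
  push_cast
  ring
end

section
/- Let 0 ≤ a, b ≤ 1 and let r, s ≥ 0 be reals with r + s = 1, and c ∈ ℂ. Let ρ = !![r, c; conj c, s] be a 2×2 complex matrix. Let Û₁ = |0⟩⟨0| ⊗ U₁ + |1⟩⟨1| ⊗ U₂ on index type Fin 2 × Fin 2, with U₁ = !![√a, √(1−a); √(1−a), −√a] and U₂ = !![√(1−b), √b; √b, −√(1−b)]. Let |φ₁⟩ = (√a, √(1−a))ᵀ and |φ₂⟩ = (√(1−b), √b)ᵀ. Then Û₁ (ρ ⊗ |0⟩⟨0|) Û₁† = r·|0⟩⟨0| ⊗ |φ₁⟩⟨φ₁| + s·|1⟩⟨1| ⊗ |φ₂⟩⟨φ₂| + c·|0⟩⟨1| ⊗ |φ₁⟩⟨φ₂| + conj(c)·|1⟩⟨0| ⊗ |φ₂⟩⟨φ₁|. -/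
open Matrix Complex
open scoped Kronecker

/-- Step 2 of Proposition 1: the action of the transition unitary on the joint
state of the system and a fresh environment qubit initialized at `|0⟩⟨0|`. -/
theorem transition_unitary_action (a b : ℝ) (ha0 : 0 ≤ a) (ha1 : a ≤ 1)
    (hb0 : 0 ≤ b) (hb1 : b ≤ 1)
    (r s : ℝ) (hr : 0 ≤ r) (hs : 0 ≤ s) (hrs : r + s = 1) (c : ℂ)
    (ρ : Matrix (Fin 2) (Fin 2) ℂ)
    (hρ : ρ = !![(r : ℂ), c; (starRingEnd ℂ) c, (s : ℂ)])
    (U₁ U₂ : Matrix (Fin 2) (Fin 2) ℂ)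
    (hU₁ : U₁ = !![(Real.sqrt a : ℂ), (Real.sqrt (1 - a) : ℂ);
                   (Real.sqrt (1 - a) : ℂ), -(Real.sqrt a : ℂ)])
    (hU₂ : U₂ = !![(Real.sqrt (1 - b) : ℂ), (Real.sqrt b : ℂ);
                   (Real.sqrt b : ℂ), -(Real.sqrt (1 - b) : ℂ)])
    (Uhat₁ : Matrix (Fin 2 × Fin 2) (Fin 2 × Fin 2) ℂ)
    (hUhat₁ : Uhat₁ = (Matrix.single (0 : Fin 2) (0 : Fin 2) (1 : ℂ)) ⊗ₖ U₁ +
                      (Matrix.single (1 : Fin 2) (1 : Fin 2) (1 : ℂ)) ⊗ₖ U₂)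
    (φ₁ φ₂ : Fin 2 → ℂ)
    (hφ₁ : φ₁ = ![(Real.sqrt a : ℂ), (Real.sqrt (1 - a) : ℂ)])
    (hφ₂ : φ₂ = ![(Real.sqrt (1 - b) : ℂ), (Real.sqrt b : ℂ)]) :
    Uhat₁ * (ρ ⊗ₖ Matrix.single (0 : Fin 2) (0 : Fin 2) (1 : ℂ)) * Uhat₁ᴴ =
      (r : ℂ) • (Matrix.single (0 : Fin 2) (0 : Fin 2) (1 : ℂ)) ⊗ₖ
          vecMulVec φ₁ (star φ₁) +
      (s : ℂ) • (Matrix.single (1 : Fin 2) (1 : Fin 2) (1 : ℂ)) ⊗ₖ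
          vecMulVec φ₂ (star φ₂) +
      c • (Matrix.single (0 : Fin 2) (1 : Fin 2) (1 : ℂ)) ⊗ₖ
          vecMulVec φ₁ (star φ₂) +
      (starRingEnd ℂ) c • (Matrix.single (1 : Fin 2) (0 : Fin 2) (1 : ℂ)) ⊗ₖ
          vecMulVec φ₂ (star φ₁) := by
  have ea : (Real.sqrt a : ℂ) * (Real.sqrt a : ℂ) = (a : ℂ) := by
    rw [← Complex.ofReal_mul, Real.mul_self_sqrt ha0]
  have ea' : (Real.sqrt (1-a) : ℂ) * (Real.sqrt (1-a) : ℂ) = ((1-a : ℝ) : ℂ) := by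
    rw [← Complex.ofReal_mul, Real.mul_self_sqrt (by linarith)]
  have eb : (Real.sqrt b : ℂ) * (Real.sqrt b : ℂ) = (b : ℂ) := by
    rw [← Complex.ofReal_mul, Real.mul_self_sqrt hb0]
  have eb' : (Real.sqrt (1-b) : ℂ) * (Real.sqrt (1-b) : ℂ) = ((1-b : ℝ) : ℂ) := by
    rw [← Complex.ofReal_mul, Real.mul_self_sqrt (by linarith)]
  subst hρ hU₁ hU₂ hUhat₁ hφ₁ hφ₂
  ext ⟨i,k⟩ ⟨j,l⟩
  fin_cases i <;> fin_cases j <;> fin_cases k <;> fin_cases l <;>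
    (simp only [mul_apply, Fintype.sum_prod_type, Fin.sum_univ_two, Matrix.add_apply,
      Matrix.smul_apply, kroneckerMap_apply, Matrix.single, Matrix.of_apply,
      Matrix.cons_val', Matrix.cons_val_zero, Matrix.cons_val_one, Matrix.head_cons,
      Matrix.head_fin_const, Matrix.empty_val', Matrix.cons_val_fin_one,
      vecMulVec_apply, Matrix.conjTranspose_apply, Pi.star_apply, star_one, star_zero,
      Prod.mk.injEq, and_true, true_and, and_false, false_and, if_true, if_false,
      ite_mul, mul_ite, zero_mul, mul_zero, one_mul, mul_one, add_zero, zero_add,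
      smul_eq_mul, Fin.isValue, Fin.zero_eta, Fin.mk_one]
     simp only [show ((0:Fin 2) ≠ 1) from by decide, show ((1:Fin 2) ≠ 0) from by decide,
       if_true, if_false, reduceIte, zero_mul, mul_zero, add_zero, zero_add]) <;>
    simp [Complex.conj_ofReal, RCLike.star_def] <;>
    ring
end

section
/- Let 0 ≤ a, b ≤ 1 and let r, s ≥ 0 be reals with r + s = 1, and c ∈ ℂ. Let ρ = !![r, c; conj c, s], and let Û₁ = |0⟩⟨0| ⊗ U₁ + |1⟩⟨1| ⊗ U₂ on index type Fin 2 × Fin 2, with U₁ = !![√a, √(1−a); √(1−a), −√a] and U₂ = !![√(1−b), √b; √b, −√(1−b)]. Define ρ' as the partial trace over the first tensor factor of Û₁ (ρ ⊗ |0⟩⟨0|) Û₁†, i.e. ρ'(j,k) = Σᵢ (Û₁ (ρ ⊗ |0⟩⟨0|) Û₁†)((i,j),(i,k)). Then ρ' = !![r·a + s·(1−b), r·√(a(1−a)) + s·√((1−b)b); r·√(a(1−a)) + s·√((1−b)b), r·(1−a) + s·b]. In particular, the diagonal of ρ' equals A x, where A = !![a, 1−b; 1−a, b] and x = (r, s)ᵀ: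 ρ'₀₀ = a·r + (1−b)·s and ρ'₁₁ = (1−a)·r + b·s. -/
open Matrix Complex
open scoped Kronecker

set_option maxHeartbeats 1600000 in
/-- Conclusion of Step 2 of Proposition 1: after applying the transition
unitary and tracing out the system particle, the environment state `ρ'` has
diagonal equal to the classically transitioned belief state `A x`. -/
theorem transition_partial_trace (a b : ℝ) (ha0 : 0 ≤ a) (ha1 : a ≤ 1)
    (hb0 : 0 ≤ b) (hb1 : b ≤ 1)
    (r s : ℝ) (hr : 0 ≤ r) (hs : 0 ≤ s) (hrs : r + s = 1) (c : ℂ)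
    (ρ : Matrix (Fin 2) (Fin 2) ℂ)
    (hρ : ρ = !![(r : ℂ), c; (starRingEnd ℂ) c, (s : ℂ)])
    (U₁ U₂ : Matrix (Fin 2) (Fin 2) ℂ)
    (hU₁ : U₁ = !![(Real.sqrt a : ℂ), (Real.sqrt (1 - a) : ℂ);
                   (Real.sqrt (1 - a) : ℂ), -(Real.sqrt a : ℂ)])
    (hU₂ : U₂ = !![(Real.sqrt (1 - b) : ℂ), (Real.sqrt b : ℂ);
                   (Real.sqrt b : ℂ), -(Real.sqrt (1 - b) : ℂ)])
    (Uhat₁ : Matrix (Fin 2 × Fin 2) (Fin 2 × Fin 2) ℂ)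
    (hUhat₁ : Uhat₁ = (Matrix.single (0 : Fin 2) (0 : Fin 2) (1 : ℂ)) ⊗ₖ U₁ +
                      (Matrix.single (1 : Fin 2) (1 : Fin 2) (1 : ℂ)) ⊗ₖ U₂)
    (ρ' : Matrix (Fin 2) (Fin 2) ℂ)
    (hρ' : ρ' = fun j k => ∑ i : Fin 2,
      (Uhat₁ * (ρ ⊗ₖ Matrix.single (0 : Fin 2) (0 : Fin 2) (1 : ℂ)) * Uhat₁ᴴ)
        (i, j) (i, k)) :
    ρ' = !![((r * a + s * (1 - b) : ℝ) : ℂ),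
            ((r * Real.sqrt (a * (1 - a)) + s * Real.sqrt ((1 - b) * b) : ℝ) : ℂ);
            ((r * Real.sqrt (a * (1 - a)) + s * Real.sqrt ((1 - b) * b) : ℝ) : ℂ),
            ((r * (1 - a) + s * b : ℝ) : ℂ)] ∧
    ρ' 0 0 = ((a * r + (1 - b) * s : ℝ) : ℂ) ∧
    ρ' 1 1 = (((1 - a) * r + b * s : ℝ) : ℂ) := by
  have h1a : (0:ℝ) ≤ 1 - a := by linarith
  have h1b : (0:ℝ) ≤ 1 - b := by linarith
  have haa : Real.sqrt a * Real.sqrt a = a := Real.mul_self_sqrt ha0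
  have haa' : Real.sqrt (1-a) * Real.sqrt (1-a) = 1-a := Real.mul_self_sqrt h1a
  have hbb : Real.sqrt b * Real.sqrt b = b := Real.mul_self_sqrt hb0
  have hbb' : Real.sqrt (1-b) * Real.sqrt (1-b) = 1-b := Real.mul_self_sqrt h1b
  have hsa : Real.sqrt (a * (1-a)) = Real.sqrt a * Real.sqrt (1-a) := Real.sqrt_mul ha0 _
  have hsb : Real.sqrt ((1-b) * b) = Real.sqrt (1-b) * Real.sqrt b := Real.sqrt_mul h1b _
  have H : ρ' = !![((r * a + s * (1 - b) : ℝ) : ℂ),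
            ((r * Real.sqrt (a * (1 - a)) + s * Real.sqrt ((1 - b) * b) : ℝ) : ℂ);
            ((r * Real.sqrt (a * (1 - a)) + s * Real.sqrt ((1 - b) * b) : ℝ) : ℂ),
            ((r * (1 - a) + s * b : ℝ) : ℂ)] := by
    subst hρ hU₁ hU₂ hUhat₁ hρ'
    ext j k
    fin_cases j <;> fin_cases k <;>
    · simp only [Matrix.mul_apply, Fintype.sum_prod_type, Fin.sum_univ_two,
        Matrix.kroneckerMap_apply, Matrix.add_apply, Matrix.conjTranspose_apply,
        Matrix.single, Matrix.of_apply, Prod.mk.injEq]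
      norm_num [Matrix.cons_val_zero, Matrix.cons_val_one, Matrix.head_cons, hsa, hsb]
      all_goals try push_cast
      all_goals try ring_nf
      all_goals simp only [show ((Real.sqrt a : ℝ) : ℂ)^2 = (a:ℂ) by
          rw [← Complex.ofReal_pow, Real.sq_sqrt ha0],
        show ((Real.sqrt (1-a) : ℝ) : ℂ)^2 = ((1-a:ℝ):ℂ) by
          rw [← Complex.ofReal_pow, Real.sq_sqrt h1a],
        show ((Real.sqrt b : ℝ) : ℂ)^2 = (b:ℂ) by
          rw [← Complex.ofReal_pow, Real.sq_sqrt hb0],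
        show ((Real.sqrt (1-b) : ℝ) : ℂ)^2 = ((1-b:ℝ):ℂ) by
          rw [← Complex.ofReal_pow, Real.sq_sqrt h1b]]
      all_goals push_cast
      all_goals ring
  refine ⟨H, ?_, ?_⟩
  · rw [H]; norm_num; push_cast; ring
  · rw [H]; norm_num; push_cast; ring
end
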